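/- Consider the PDS method run for all k ∈ ℕ, under the saddle-point assumption, with T⁽ᵏ⁾ ≠ 0 for all k and the chosen subgradient selections bounded in norm on every bounded subset of ℝⁿ. For each k ≥ 1 let i_k be any index in argmin_{1 ≤ i ≤ k} ⟨T⁽ⁱ⁾, z⁽ⁱ⁾ − z*⟩. Then there exists W > 0 such that for all k ≥ 1: |f₀(x^{(i_k)}) − p*| ≤ W·(k+1)^{−δ/(2s)} and ‖F(x^{(i_k)})‖₂ + ‖A x^{(i_k)} − b‖₂ ≤ W·(k+1)^{−δ/(2s)}; in particular |f₀(x^{(i_k)}) − p*| → 0 and ‖F(x^{(i_k)})‖₂ + ‖A x^{(i_k)} − b‖₂ → 0 as k → ∞. -/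

import Mathlib

open scoped RealInnerProductSpace Classical
open Matrix

/-- `A x` for `A` an `l × n` real matrix and `x ∈ ℝⁿ`, as Euclidean spaces. -/
noncomputable def mulVecE {l n : ℕ} (A : Matrix (Fin l) (Fin n) ℝ)
    (x : EuclideanSpace ℝ (Fin n)) : EuclideanSpace ℝ (Fin l) :=
  Matrix.toEuclideanLin A x

/-- `F(x) = (max{f₁(x),0}, …, max{f_m(x),0})`. -/
noncomputable def Fplus {n m : ℕ} (f : Fin m → EuclideanSpace ℝ (Fin n) → ℝ)
    (x : EuclideanSpace ℝ (Fin n)) : EuclideanSpace ℝ (Fin m) :=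
  (WithLp.equiv 2 (Fin m → ℝ)).symm fun i => max (f i x) 0

/-- The Lagrangian `L(x, λ, ν) = f₀(x) + λᵀF(x) + νᵀ(Ax - b)`. -/
noncomputable def Lag {n m l : ℕ} (f0 : EuclideanSpace ℝ (Fin n) → ℝ)
    (f : Fin m → EuclideanSpace ℝ (Fin n) → ℝ)
    (A : Matrix (Fin l) (Fin n) ℝ) (b : EuclideanSpace ℝ (Fin l))
    (x : EuclideanSpace ℝ (Fin n)) (lam : EuclideanSpace ℝ (Fin m))
    (nu : EuclideanSpace ℝ (Fin l)) : ℝ :=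
  f0 x + ⟪lam, Fplus f x⟫ + ⟪nu, mulVecE A x - b⟫

private lemma einner {m : ℕ} (x y : EuclideanSpace ℝ (Fin m)) : ⟪x,y⟫ = ∑ i, x i * y i := by
  simp [PiLp.inner_apply, RCLike.inner_apply, mul_comm]

private lemma eabs_le_norm {m : ℕ} (x : EuclideanSpace ℝ (Fin m)) (i : Fin m) : |x i| ≤ ‖x‖ := by
  rw [EuclideanSpace.norm_eq, ← Real.sqrt_sq_eq_abs]
  apply Real.sqrt_le_sqrt
  calc x i ^ 2 = ‖x i‖ ^ 2 := by rw [Real.norm_eq_abs, sq_abs]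
    _ ≤ ∑ j, ‖x j‖ ^ 2 :=
      Finset.single_le_sum (f := fun j => ‖x j‖ ^ 2) (fun j _ => sq_nonneg _) (Finset.mem_univ i)

private lemma enorm_le_of_forall {m : ℕ} (x : EuclideanSpace ℝ (Fin m)) (c : ℝ) (hc : 0 ≤ c)
    (h : ∀ i, |x i| ≤ c) : ‖x‖ ≤ Real.sqrt m * c := by
  rw [EuclideanSpace.norm_eq]
  calc Real.sqrt (∑ i, ‖x i‖ ^ 2) ≤ Real.sqrt (∑ _i : Fin m, c ^ 2) := by
        apply Real.sqrt_le_sqrt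
        apply Finset.sum_le_sum
        intro i _
        rw [Real.norm_eq_abs]
        exact pow_le_pow_left₀ (abs_nonneg _) (h i) 2
    _ = Real.sqrt m * c := by
        rw [Finset.sum_const, Finset.card_univ, Fintype.card_fin, nsmul_eq_mul,
          Real.sqrt_mul (by positivity), Real.sqrt_sq hc]

private lemma esqrt3_le (a b c : ℝ) (ha : 0 ≤ a) (hb : 0 ≤ b) (hc : 0 ≤ c) :
    Real.sqrt (a ^ 2 + b ^ 2 + c ^ 2) ≤ a + b + c := by
  calc Real.sqrt (a ^ 2 + b ^ 2 + c ^ 2) ≤ Real.sqrt ((a + b + c) ^ 2) :=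
        Real.sqrt_le_sqrt (by nlinarith)
    _ = a + b + c := Real.sqrt_sq (by positivity)

private lemma mulVecE_transpose {l n : ℕ} (A : Matrix (Fin l) (Fin n) ℝ)
    (v : EuclideanSpace ℝ (Fin l)) (w : EuclideanSpace ℝ (Fin n)) :
    ⟪mulVecE Aᵀ v, w⟫ = ⟪v, mulVecE A w⟫ := by
  simp only [mulVecE, einner, Matrix.toEuclideanLin_apply, PiLp.toLp_apply,
    Matrix.mulVec, dotProduct, Matrix.transpose_apply]
  simp only [Finset.sum_mul, Finset.mul_sum]
  rw [Finset.sum_comm]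
  apply Finset.sum_congr rfl
  intro i _
  apply Finset.sum_congr rfl
  intro j _
  show A i j * v i * w j = v i * (A i j * w j)
  ring

private lemma mulVecE_bound {l n : ℕ} (A : Matrix (Fin l) (Fin n) ℝ) :
    ∃ C : ℝ, 0 ≤ C ∧ ∀ v, ‖mulVecE A v‖ ≤ C * ‖v‖ := by
  refine ⟨‖LinearMap.toContinuousLinearMap (Matrix.toEuclideanLin A)‖, norm_nonneg _, fun v => ?_⟩
  exact (LinearMap.toContinuousLinearMap (Matrix.toEuclideanLin A)).le_opNorm v

private lemma mulVecE_sub {l n : ℕ} (A : Matrix (Fin l) (Fin n) ℝ)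
    (x y : EuclideanSpace ℝ (Fin n)) : mulVecE A (x - y) = mulVecE A x - mulVecE A y :=
  map_sub (Matrix.toEuclideanLin A) x y

set_option maxHeartbeats 2000000 in
/-- PDS convergence lemma along the argmin subsequence `i_k`. -/
theorem pds_argmin_convergence
    (n m l : ℕ)
    (f0 : EuclideanSpace ℝ (Fin n) → ℝ)
    (f : Fin m → EuclideanSpace ℝ (Fin n) → ℝ)
    (hf0 : ConvexOn ℝ Set.univ f0)
    (hf : ∀ i, ConvexOn ℝ Set.univ (f i))
    (A : Matrix (Fin l) (Fin n) ℝ) (b : EuclideanSpace ℝ (Fin l))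
    (pstar : ℝ)
    (xstar : EuclideanSpace ℝ (Fin n))
    (lamstar : EuclideanSpace ℝ (Fin m)) (nustar : EuclideanSpace ℝ (Fin l))
    -- x* is primal optimal with value p*
    (hxfeas : ∀ i, f i xstar ≤ 0) (hxeq : mulVecE A xstar = b)
    (hxval : f0 xstar = pstar)
    -- saddle-point assumption
    (hlamstar : ∀ i, 0 ≤ lamstar i)
    (hsaddle_eq : Lag f0 f A b xstar lamstar nustar = pstar)
    (hsaddle1 : ∀ (lam : EuclideanSpace ℝ (Fin m)) (nu : EuclideanSpace ℝ (Fin l)),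
      (∀ i, 0 ≤ lam i) → Lag f0 f A b xstar lam nu ≤ pstar)
    (hsaddle2 : ∀ x, pstar ≤ Lag f0 f A b x lamstar nustar)
    -- parameters s ∈ [1,2], ρ > 0, δ ∈ (0,1)
    (s ρ δ : ℝ) (hs1 : 1 ≤ s) (hs2 : s ≤ 2) (hρ : 0 < ρ)
    (hδ0 : 0 < δ) (hδ1 : δ < 1)
    -- fixed subgradient selections g₀(x) ∈ ∂f₀(x), gᵢ(x) ∈ ∂Fᵢ(x),
    -- bounded in norm on every bounded subset of ℝⁿ
    (g0 : EuclideanSpace ℝ (Fin n) → EuclideanSpace ℝ (Fin n))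
    (hg0 : ∀ x y, ⟪g0 x, y - x⟫ ≤ f0 y - f0 x)
    (g : Fin m → EuclideanSpace ℝ (Fin n) → EuclideanSpace ℝ (Fin n))
    (hg : ∀ i x y, ⟪g i x, y - x⟫ ≤ max (f i y) 0 - max (f i x) 0)
    (hbdd : ∀ B : Set (EuclideanSpace ℝ (Fin n)), Bornology.IsBounded B →
      ∃ M : ℝ, ∀ x ∈ B, ‖g0 x‖ ≤ M ∧ ∀ i, ‖g i x‖ ≤ M)
    -- the PDS iterates z⁽ᵏ⁾ = (x⁽ᵏ⁾, λ⁽ᵏ⁾, ν⁽ᵏ⁾)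
    (xk : ℕ → EuclideanSpace ℝ (Fin n))
    (lamk : ℕ → EuclideanSpace ℝ (Fin m))
    (nuk : ℕ → EuclideanSpace ℝ (Fin l))
    (hlam0 : ∀ i, 0 ≤ lamk 0 i)
    -- the penalty terms ϱ⁽ᵏ⁾ and ς⁽ᵏ⁾
    (ϱ : ℕ → EuclideanSpace ℝ (Fin m))
    (hϱ : ∀ k, ϱ k = if Fplus f (xk k) ≠ 0 then
      (s * ‖Fplus f (xk k)‖ ^ (s - 2)) • Fplus f (xk k) else 0)
    (ς : ℕ → EuclideanSpace ℝ (Fin l))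
    (hς : ∀ k, ς k = if mulVecE A (xk k) ≠ b then
      (s * ‖mulVecE A (xk k) - b‖ ^ (s - 2)) • (mulVecE A (xk k) - b) else 0)
    -- T⁽ᵏ⁾: primal component Tx k and total Euclidean norm nT k
    (Tx : ℕ → EuclideanSpace ℝ (Fin n))
    (hTx : ∀ k, Tx k = g0 (xk k)
      + (∑ i, (lamk k i + ρ * ϱ k i) • g i (xk k))
      + mulVecE Aᵀ (nuk k + ρ • ς k))
    (nT : ℕ → ℝ)
    (hnT : ∀ k, nT k = Real.sqrt (‖Tx k‖ ^ 2 + ‖Fplus f (xk k)‖ ^ 2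
      + ‖mulVecE A (xk k) - b‖ ^ 2))
    -- T⁽ᵏ⁾ ≠ 0
    (hTne : ∀ k, ¬ (Tx k = 0 ∧ Fplus f (xk k) = 0 ∧ mulVecE A (xk k) - b = 0))
    -- step sizes αₖ = γₖ/‖T⁽ᵏ⁾‖₂ with γₖ = (k+1)^(-1+δ/2)
    (γ α : ℕ → ℝ)
    (hγ : ∀ k, γ k = ((k : ℝ) + 1) ^ (-1 + δ / 2))
    (hα : ∀ k, α k = γ k / nT k)
    -- the update z⁽ᵏ⁺¹⁾ = z⁽ᵏ⁾ - αₖ T⁽ᵏ⁾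
    (hxk : ∀ k, xk (k + 1) = xk k - α k • Tx k)
    (hlamk : ∀ k, lamk (k + 1) = lamk k + α k • Fplus f (xk k))
    (hnuk : ∀ k, nuk (k + 1) = nuk k + α k • (mulVecE A (xk k) - b))
    -- ⟨T⁽ʲ⁾, z⁽ʲ⁾ - z*⟩
    (iT : ℕ → ℝ)
    (hiT : ∀ j, iT j = ⟪Tx j, xk j - xstar⟫
      + ⟪-(Fplus f (xk j)), lamk j - lamstar⟫
      + ⟪-(mulVecE A (xk j) - b), nuk j - nustar⟫)
    -- i_k ∈ argmin_{1 ≤ i ≤ k} ⟨T⁽ⁱ⁾, z⁽ⁱ⁾ - z*⟩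
    (ik : ℕ → ℕ)
    (hik : ∀ k, 1 ≤ k → 1 ≤ ik k ∧ ik k ≤ k ∧
      ∀ i, 1 ≤ i → i ≤ k → iT (ik k) ≤ iT i) :
    ∃ W : ℝ, 0 < W ∧
      (∀ k : ℕ, 1 ≤ k →
        |f0 (xk (ik k)) - pstar| ≤ W * ((k : ℝ) + 1) ^ (-(δ / (2 * s))) ∧
        ‖Fplus f (xk (ik k))‖ + ‖mulVecE A (xk (ik k)) - b‖
          ≤ W * ((k : ℝ) + 1) ^ (-(δ / (2 * s)))) ∧
      Filter.Tendsto (fun k => |f0 (xk (ik k)) - pstar|)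
        Filter.atTop (nhds 0) ∧
      Filter.Tendsto (fun k => ‖Fplus f (xk (ik k))‖ + ‖mulVecE A (xk (ik k)) - b‖)
        Filter.atTop (nhds 0) := by
  classical
  have hs0 : (0:ℝ) < s := lt_of_lt_of_le one_pos hs1
  have hFdef : ∀ (x : EuclideanSpace ℝ (Fin n)) i, Fplus f x i = max (f i x) 0 := fun x i => rfl
  have hFnn : ∀ k i, 0 ≤ Fplus f (xk k) i := fun k i => by
    rw [hFdef]; exact le_max_right _ _
  have hnT2 : ∀ k, nT k ^ 2 = ‖Tx k‖ ^ 2 + ‖Fplus f (xk k)‖ ^ 2 + ‖mulVecE A (xk k) - b‖ ^ 2 := by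
    intro k; rw [hnT k]; exact Real.sq_sqrt (by positivity)
  have hnTnn : ∀ k, 0 ≤ nT k := fun k => by rw [hnT k]; exact Real.sqrt_nonneg _
  have hnTpos : ∀ k, 0 < nT k := by
    intro k
    rcases (hnTnn k).lt_or_eq with h | h
    · exact h
    · exfalso
      have h2 : ‖Tx k‖ ^ 2 + ‖Fplus f (xk k)‖ ^ 2 + ‖mulVecE A (xk k) - b‖ ^ 2 = 0 := by
        rw [← hnT2 k, ← h]; ring
      have e1 : ‖Tx k‖ ^ 2 = 0 := by
        nlinarith [sq_nonneg ‖Fplus f (xk k)‖, sq_nonneg ‖mulVecE A (xk k) - b‖, sq_nonneg ‖Tx k‖]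
      have e2 : ‖Fplus f (xk k)‖ ^ 2 = 0 := by
        nlinarith [sq_nonneg ‖Fplus f (xk k)‖, sq_nonneg ‖mulVecE A (xk k) - b‖, sq_nonneg ‖Tx k‖]
      have e3 : ‖mulVecE A (xk k) - b‖ ^ 2 = 0 := by
        nlinarith [sq_nonneg ‖Fplus f (xk k)‖, sq_nonneg ‖mulVecE A (xk k) - b‖, sq_nonneg ‖Tx k‖]
      exact hTne k ⟨norm_eq_zero.mp (pow_eq_zero_iff two_ne_zero |>.mp e1),
        norm_eq_zero.mp (pow_eq_zero_iff two_ne_zero |>.mp e2),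
        norm_eq_zero.mp (pow_eq_zero_iff two_ne_zero |>.mp e3)⟩
  have hγpos : ∀ k, 0 < γ k := fun k => by
    rw [hγ k]; exact Real.rpow_pos_of_pos (by positivity) _
  have hαpos : ∀ k, 0 < α k := fun k => by rw [hα k]; exact div_pos (hγpos k) (hnTpos k)
  have hαnT : ∀ k, α k * nT k = γ k := fun k => by
    rw [hα k]; exact div_mul_cancel₀ (γ k) (hnTpos k).ne'
  have hlamnn : ∀ k i, 0 ≤ lamk k i := by
    intro k
    induction k with
    | zero => exact hlam0
    | succ k ih =>
      intro i
      rw [hlamk k]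
      have e : (lamk k + α k • Fplus f (xk k)) i = lamk k i + α k * Fplus f (xk k) i := rfl
      rw [e]
      exact add_nonneg (ih i) (mul_nonneg (hαpos k).le (hFnn k i))
  have hnormsq : ∀ {N : ℕ} (v : EuclideanSpace ℝ (Fin N)), ‖v‖ ^ 2 = ∑ i, v i ^ 2 := by
    intro N v
    rw [EuclideanSpace.norm_eq, Real.sq_sqrt (by positivity)]
    exact Finset.sum_congr rfl fun i _ => by rw [Real.norm_eq_abs, sq_abs]
  have hϱnn : ∀ k i, 0 ≤ ϱ k i := by
    intro k i
    rw [hϱ k]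
    split_ifs with h
    · have e : ((s * ‖Fplus f (xk k)‖ ^ (s - 2)) • Fplus f (xk k)) i
          = s * ‖Fplus f (xk k)‖ ^ (s - 2) * Fplus f (xk k) i := rfl
      rw [e]
      exact mul_nonneg (mul_nonneg hs0.le (Real.rpow_nonneg (norm_nonneg _) _)) (hFnn k i)
    · simp
  have hϱF : ∀ k, ∑ i, ϱ k i * Fplus f (xk k) i = s * ‖Fplus f (xk k)‖ ^ s := by
    intro k
    rw [hϱ k]
    split_ifs with h
    · have hpos : 0 < ‖Fplus f (xk k)‖ := norm_pos_iff.mpr h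
      have e : ∀ i : Fin m, ((s * ‖Fplus f (xk k)‖ ^ (s - 2)) • Fplus f (xk k)) i * Fplus f (xk k) i
          = s * ‖Fplus f (xk k)‖ ^ (s - 2) * Fplus f (xk k) i ^ 2 := by
        intro i
        show s * ‖Fplus f (xk k)‖ ^ (s - 2) * Fplus f (xk k) i * Fplus f (xk k) i = _
        ring
      rw [Finset.sum_congr rfl fun i _ => e i, ← Finset.mul_sum, ← hnormsq]
      rw [mul_assoc]
      congr 1
      rw [← Real.rpow_natCast (‖Fplus f (xk k)‖) 2, ← Real.rpow_add hpos]
      norm_num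
    · push_neg at h
      rw [h]
      simp [Real.zero_rpow hs0.ne']
  have hςinner : ∀ k, ⟪ς k, mulVecE A (xk k) - b⟫ = s * ‖mulVecE A (xk k) - b‖ ^ s := by
    intro k
    rw [hς k]
    split_ifs with h
    · have hne : mulVecE A (xk k) - b ≠ 0 := sub_ne_zero.mpr h
      have hpos : 0 < ‖mulVecE A (xk k) - b‖ := norm_pos_iff.mpr hne
      rw [real_inner_smul_left, real_inner_self_eq_norm_sq, mul_assoc]
      congr 1
      rw [← Real.rpow_natCast (‖mulVecE A (xk k) - b‖) 2, ← Real.rpow_add hpos]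
      norm_num
    · push_neg at h
      simp [h, Real.zero_rpow hs0.ne']
  have hAx : ∀ x' : EuclideanSpace ℝ (Fin n), mulVecE A (x' - xstar) = mulVecE A x' - b := by
    intro x'; rw [mulVecE_sub, hxeq]
  have hkey : ∀ k, Lag f0 f A b (xk k) lamstar nustar - pstar
      + ρ * (s * (‖Fplus f (xk k)‖ ^ s + ‖mulVecE A (xk k) - b‖ ^ s)) ≤ iT k := by
    intro k
    rw [hiT k, hTx k, inner_add_left, inner_add_left]
    have t1 : f0 (xk k) - pstar ≤ ⟪g0 (xk k), xk k - xstar⟫ := by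
      have h1 := hg0 (xk k) xstar
      have h2 : ⟪g0 (xk k), xstar - xk k⟫ = -⟪g0 (xk k), xk k - xstar⟫ := by
        rw [← inner_neg_right, neg_sub]
      rw [h2, hxval] at h1
      linarith
    have t2 : ⟪lamk k, Fplus f (xk k)⟫ + ρ * (s * ‖Fplus f (xk k)‖ ^ s)
        ≤ ⟪∑ i, (lamk k i + ρ * ϱ k i) • g i (xk k), xk k - xstar⟫ := by
      rw [sum_inner]
      have step : ∀ i, (lamk k i + ρ * ϱ k i) * Fplus f (xk k) i
          ≤ ⟪(lamk k i + ρ * ϱ k i) • g i (xk k), xk k - xstar⟫ := by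
        intro i
        rw [real_inner_smul_left]
        apply mul_le_mul_of_nonneg_left ?_ (add_nonneg (hlamnn k i) (mul_nonneg hρ.le (hϱnn k i)))
        have h1 := hg i (xk k) xstar
        have h2 : ⟪g i (xk k), xstar - xk k⟫ = -⟪g i (xk k), xk k - xstar⟫ := by
          rw [← inner_neg_right, neg_sub]
        rw [h2, max_eq_right (hxfeas i)] at h1
        rw [hFdef]
        linarith
      calc ⟪lamk k, Fplus f (xk k)⟫ + ρ * (s * ‖Fplus f (xk k)‖ ^ s)
          = ∑ i, (lamk k i + ρ * ϱ k i) * Fplus f (xk k) i := by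
            rw [einner, ← hϱF k, Finset.mul_sum, ← Finset.sum_add_distrib]
            exact Finset.sum_congr rfl fun i _ => by ring
        _ ≤ ∑ i, ⟪(lamk k i + ρ * ϱ k i) • g i (xk k), xk k - xstar⟫ :=
            Finset.sum_le_sum fun i _ => step i
    have t3 : ⟪mulVecE Aᵀ (nuk k + ρ • ς k), xk k - xstar⟫
        = ⟪nuk k, mulVecE A (xk k) - b⟫ + ρ * (s * ‖mulVecE A (xk k) - b‖ ^ s) := by
      rw [mulVecE_transpose, hAx (xk k), inner_add_left, real_inner_smul_left, hςinner k]
    have e4 : ⟪-(Fplus f (xk k)), lamk k - lamstar⟫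
        = -⟪lamk k, Fplus f (xk k)⟫ + ⟪lamstar, Fplus f (xk k)⟫ := by
      rw [inner_neg_left, inner_sub_right, real_inner_comm (Fplus f (xk k)) (lamk k),
        real_inner_comm (Fplus f (xk k)) lamstar]
      ring
    have e5 : ⟪-(mulVecE A (xk k) - b), nuk k - nustar⟫
        = -⟪nuk k, mulVecE A (xk k) - b⟫ + ⟪nustar, mulVecE A (xk k) - b⟫ := by
      rw [inner_neg_left, inner_sub_right, real_inner_comm (mulVecE A (xk k) - b) (nuk k),
        real_inner_comm (mulVecE A (xk k) - b) nustar]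
      ring
    have e6 : Lag f0 f A b (xk k) lamstar nustar
        = f0 (xk k) + ⟪lamstar, Fplus f (xk k)⟫ + ⟪nustar, mulVecE A (xk k) - b⟫ := rfl
    rw [e6, t3, e4, e5]
    linarith
  have hiTF : ∀ k, ρ * (s * (‖Fplus f (xk k)‖ ^ s + ‖mulVecE A (xk k) - b‖ ^ s)) ≤ iT k := by
    intro k
    have h1 := hkey k
    have h2 := hsaddle2 (xk k)
    linarith
  have hiTnn : ∀ k, 0 ≤ iT k := by
    intro k
    refine le_trans ?_ (hiTF k)
    have ha := Real.rpow_nonneg (norm_nonneg (Fplus f (xk k))) s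
    have hb := Real.rpow_nonneg (norm_nonneg (mulVecE A (xk k) - b)) s
    exact mul_nonneg hρ.le (mul_nonneg hs0.le (add_nonneg ha hb))
  obtain ⟨D, hD⟩ : ∃ D : ℕ → ℝ, ∀ k,
      D k = ‖xk k - xstar‖ ^ 2 + ‖lamk k - lamstar‖ ^ 2 + ‖nuk k - nustar‖ ^ 2 :=
    ⟨_, fun k => rfl⟩
  have hDnn : ∀ k, 0 ≤ D k := by
    intro k
    rw [hD k]
    positivity
  have hDrec : ∀ k, D (k + 1) = D k - 2 * α k * iT k + γ k ^ 2 := by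
    intro k
    have e1 : ‖xk (k+1) - xstar‖ ^ 2
        = ‖xk k - xstar‖ ^ 2 - 2 * (α k * ⟪Tx k, xk k - xstar⟫) + α k ^ 2 * ‖Tx k‖ ^ 2 := by
      rw [hxk k, sub_right_comm, norm_sub_sq_real, real_inner_smul_right, norm_smul,
        Real.norm_eq_abs, mul_pow, sq_abs, real_inner_comm]
    have e2 : ‖lamk (k+1) - lamstar‖ ^ 2
        = ‖lamk k - lamstar‖ ^ 2 + 2 * (α k * ⟪Fplus f (xk k), lamk k - lamstar⟫)
          + α k ^ 2 * ‖Fplus f (xk k)‖ ^ 2 := by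
      rw [hlamk k, add_sub_right_comm, norm_add_sq_real, real_inner_smul_right, norm_smul,
        Real.norm_eq_abs, mul_pow, sq_abs, real_inner_comm]
    have e3 : ‖nuk (k+1) - nustar‖ ^ 2
        = ‖nuk k - nustar‖ ^ 2 + 2 * (α k * ⟪mulVecE A (xk k) - b, nuk k - nustar⟫)
          + α k ^ 2 * ‖mulVecE A (xk k) - b‖ ^ 2 := by
      rw [hnuk k, add_sub_right_comm, norm_add_sq_real, real_inner_smul_right, norm_smul,
        Real.norm_eq_abs, mul_pow, sq_abs, real_inner_comm]
    have e4 : α k ^ 2 * (‖Tx k‖ ^ 2 + ‖Fplus f (xk k)‖ ^ 2 + ‖mulVecE A (xk k) - b‖ ^ 2)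
        = γ k ^ 2 := by
      rw [← hnT2 k, ← mul_pow, hαnT k]
    have e5 := hiT k
    rw [inner_neg_left, inner_neg_left] at e5
    rw [hD (k+1), hD k, e1, e2, e3, e5, ← e4]
    ring
  have hsum : Summable (fun j : ℕ => ((j : ℝ) + 1) ^ (-2 + δ)) := by
    have h1 : Summable (fun j : ℕ => ((j : ℝ)) ^ (-2 + δ)) :=
      Real.summable_nat_rpow.2 (by linarith)
    have h2 := h1.comp_injective Nat.succ_injective
    refine h2.congr fun j => ?_
    simp only [Function.comp_apply]
    push_cast
    norm_num
  set Sγ : ℝ := ∑' j : ℕ, ((j : ℝ) + 1) ^ (-2 + δ) with hSγ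
  have hγsq : ∀ k, γ k ^ 2 = ((k : ℝ) + 1) ^ (-2 + δ) := by
    intro k
    rw [hγ k, sq, ← Real.rpow_add (by positivity)]
    congr 1
    ring
  have hSγnn : 0 ≤ Sγ := tsum_nonneg fun j => Real.rpow_nonneg (by positivity) _
  have hpartial : ∀ k, ∑ j ∈ Finset.range k, γ j ^ 2 ≤ Sγ := by
    intro k
    calc ∑ j ∈ Finset.range k, γ j ^ 2 = ∑ j ∈ Finset.range k, ((j : ℝ) + 1) ^ (-2 + δ) :=
          Finset.sum_congr rfl fun j _ => hγsq j
      _ ≤ Sγ := Summable.sum_le_tsum _ (fun j _ => Real.rpow_nonneg (by positivity) _) hsum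
  have htel : ∀ k, D k + ∑ j ∈ Finset.range k, 2 * α j * iT j
      = D 0 + ∑ j ∈ Finset.range k, γ j ^ 2 := by
    intro k
    induction k with
    | zero => simp
    | succ k ih =>
      rw [Finset.sum_range_succ, Finset.sum_range_succ, hDrec k]
      linarith
  have hDb : ∀ k, D k ≤ D 0 + Sγ := by
    intro k
    have h1 := htel k
    have h2 : 0 ≤ ∑ j ∈ Finset.range k, 2 * α j * iT j :=
      Finset.sum_nonneg fun j _ => mul_nonneg (mul_nonneg (by norm_num) (hαpos j).le) (hiTnn j)
    have h3 := hpartial k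
    linarith
  set R : ℝ := Real.sqrt (D 0 + Sγ) with hR
  have hRnn : 0 ≤ R := Real.sqrt_nonneg _
  have hxR : ∀ k, ‖xk k - xstar‖ ≤ R := by
    intro k
    have h1 := hDb k
    rw [hD k] at h1
    calc ‖xk k - xstar‖ = Real.sqrt (‖xk k - xstar‖ ^ 2) := (Real.sqrt_sq (norm_nonneg _)).symm
      _ ≤ R := by
          rw [hR]
          apply Real.sqrt_le_sqrt
          linarith [sq_nonneg ‖lamk k - lamstar‖, sq_nonneg ‖nuk k - nustar‖]
  have hlamR : ∀ k, ‖lamk k - lamstar‖ ≤ R := by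
    intro k
    have h1 := hDb k
    rw [hD k] at h1
    calc ‖lamk k - lamstar‖ = Real.sqrt (‖lamk k - lamstar‖ ^ 2) :=
          (Real.sqrt_sq (norm_nonneg _)).symm
      _ ≤ R := by
          rw [hR]
          apply Real.sqrt_le_sqrt
          linarith [sq_nonneg ‖xk k - xstar‖, sq_nonneg ‖nuk k - nustar‖]
  have hnuR : ∀ k, ‖nuk k - nustar‖ ≤ R := by
    intro k
    have h1 := hDb k
    rw [hD k] at h1
    calc ‖nuk k - nustar‖ = Real.sqrt (‖nuk k - nustar‖ ^ 2) :=
          (Real.sqrt_sq (norm_nonneg _)).symm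
      _ ≤ R := by
          rw [hR]
          apply Real.sqrt_le_sqrt
          linarith [sq_nonneg ‖xk k - xstar‖, sq_nonneg ‖lamk k - lamstar‖]
  obtain ⟨M0, hM0⟩ := hbdd (Metric.closedBall xstar R) Metric.isBounded_closedBall
  set M := max M0 0 with hM
  have hMnn : 0 ≤ M := le_max_right _ _
  have hmem : ∀ k, xk k ∈ Metric.closedBall xstar R := by
    intro k
    rw [Metric.mem_closedBall, dist_eq_norm]
    exact hxR k
  have hg0M : ∀ k, ‖g0 (xk k)‖ ≤ M := fun k => le_trans (hM0 _ (hmem k)).1 (le_max_left _ _)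
  have hgM : ∀ k i, ‖g i (xk k)‖ ≤ M := fun k i =>
    le_trans ((hM0 _ (hmem k)).2 i) (le_max_left _ _)
  have hFiMR : ∀ k i, Fplus f (xk k) i ≤ M * R := by
    intro k i
    have h1 := hg i (xk k) xstar
    have h2 : ⟪g i (xk k), xstar - xk k⟫ = -⟪g i (xk k), xk k - xstar⟫ := by
      rw [← inner_neg_right, neg_sub]
    rw [h2, max_eq_right (hxfeas i)] at h1
    have h3 : ⟪g i (xk k), xk k - xstar⟫ ≤ M * R :=
      le_trans (real_inner_le_norm _ _) (mul_le_mul (hgM k i) (hxR k) (norm_nonneg _) hMnn)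
    rw [hFdef]
    linarith
  set Fmax : ℝ := Real.sqrt m * (M * R) with hFm
  have hFmaxnn : 0 ≤ Fmax := by
    rw [hFm]; positivity
  have hFb : ∀ k, ‖Fplus f (xk k)‖ ≤ Fmax := by
    intro k
    rw [hFm]
    exact enorm_le_of_forall _ _ (by positivity) fun i => by
      rw [abs_of_nonneg (hFnn k i)]; exact hFiMR k i
  obtain ⟨CA, hCA0, hCA⟩ := mulVecE_bound A
  obtain ⟨CT, hCT0, hCT⟩ := mulVecE_bound Aᵀ
  set hmax : ℝ := CA * R with hhm
  have hhmaxnn : 0 ≤ hmax := mul_nonneg hCA0 hRnn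
  have hhb : ∀ k, ‖mulVecE A (xk k) - b‖ ≤ hmax := by
    intro k
    rw [← hAx (xk k), hhm]
    exact le_trans (hCA _) (mul_le_mul_of_nonneg_left (hxR k) hCA0)
  have hpow1 : ∀ (t c : ℝ), 0 ≤ t → t ≤ c → t ^ (s - 1) ≤ 1 + c := by
    intro t c ht htc
    rcases le_or_gt t 1 with h | h
    · calc t ^ (s-1) ≤ 1 := Real.rpow_le_one ht h (by linarith)
        _ ≤ 1 + c := by linarith [le_trans ht htc]
    · calc t ^ (s-1) ≤ t ^ (1:ℝ) := Real.rpow_le_rpow_of_exponent_le h.le (by linarith)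
        _ = t := Real.rpow_one t
        _ ≤ 1 + c := by linarith
  have hϱb : ∀ k, ‖ϱ k‖ ≤ s * (1 + Fmax) := by
    intro k
    rw [hϱ k]
    split_ifs with h
    · have hpos : 0 < ‖Fplus f (xk k)‖ := norm_pos_iff.mpr h
      rw [norm_smul, Real.norm_eq_abs,
        abs_of_nonneg (mul_nonneg hs0.le (Real.rpow_nonneg (norm_nonneg _) _))]
      have e : ‖Fplus f (xk k)‖ ^ (s-2) * ‖Fplus f (xk k)‖ = ‖Fplus f (xk k)‖ ^ (s-1) := by
        nth_rewrite 2 [← Real.rpow_one ‖Fplus f (xk k)‖]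
        rw [← Real.rpow_add hpos]
        congr 1
        ring
      rw [mul_assoc, e]
      exact mul_le_mul_of_nonneg_left (hpow1 _ _ (norm_nonneg _) (hFb k)) hs0.le
    · simp only [norm_zero]
      exact mul_nonneg hs0.le (by linarith)
  have hςb : ∀ k, ‖ς k‖ ≤ s * (1 + hmax) := by
    intro k
    rw [hς k]
    split_ifs with h
    · have hne : mulVecE A (xk k) - b ≠ 0 := sub_ne_zero.mpr h
      have hpos : 0 < ‖mulVecE A (xk k) - b‖ := norm_pos_iff.mpr hne
      rw [norm_smul, Real.norm_eq_abs,
        abs_of_nonneg (mul_nonneg hs0.le (Real.rpow_nonneg (norm_nonneg _) _))]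
      have e : ‖mulVecE A (xk k) - b‖ ^ (s-2) * ‖mulVecE A (xk k) - b‖
          = ‖mulVecE A (xk k) - b‖ ^ (s-1) := by
        nth_rewrite 2 [← Real.rpow_one ‖mulVecE A (xk k) - b‖]
        rw [← Real.rpow_add hpos]
        congr 1
        ring
      rw [mul_assoc, e]
      exact mul_le_mul_of_nonneg_left (hpow1 _ _ (norm_nonneg _) (hhb k)) hs0.le
    · simp only [norm_zero]
      exact mul_nonneg hs0.le (by linarith)
  have hlamN : ∀ k, ‖lamk k‖ ≤ ‖lamstar‖ + R := by
    intro k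
    have h1 := hlamR k
    have h2 := norm_sub_norm_le (lamk k) lamstar
    linarith
  have hnuN : ∀ k, ‖nuk k‖ ≤ ‖nustar‖ + R := by
    intro k
    have h1 := hnuR k
    have h2 := norm_sub_norm_le (nuk k) nustar
    linarith
  set Tb : ℝ := M + m * ((‖lamstar‖ + R + ρ * (s * (1 + Fmax))) * M)
    + CT * (‖nustar‖ + R + ρ * (s * (1 + hmax))) with hTbd
  have hcoefnn : (0:ℝ) ≤ ‖lamstar‖ + R + ρ * (s * (1 + Fmax)) := by
    have : 0 ≤ ρ * (s * (1 + Fmax)) := mul_nonneg hρ.le (mul_nonneg hs0.le (by linarith))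
    have := norm_nonneg lamstar
    linarith
  have hTxb : ∀ k, ‖Tx k‖ ≤ Tb := by
    intro k
    rw [hTx k]
    have b1 : ‖g0 (xk k)‖ ≤ M := hg0M k
    have b2 : ‖∑ i, (lamk k i + ρ * ϱ k i) • g i (xk k)‖
        ≤ m * ((‖lamstar‖ + R + ρ * (s * (1 + Fmax))) * M) := by
      calc ‖∑ i, (lamk k i + ρ * ϱ k i) • g i (xk k)‖
          ≤ ∑ i, ‖(lamk k i + ρ * ϱ k i) • g i (xk k)‖ := norm_sum_le _ _
        _ ≤ ∑ _i : Fin m, (‖lamstar‖ + R + ρ * (s * (1 + Fmax))) * M := by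
            apply Finset.sum_le_sum
            intro i _
            rw [norm_smul, Real.norm_eq_abs]
            apply mul_le_mul ?_ (hgM k i) (norm_nonneg _) hcoefnn
            have c1 := eabs_le_norm (lamk k) i
            have c2 := eabs_le_norm (ϱ k) i
            have c3 := hlamN k
            have c4 := hϱb k
            have c5 : |lamk k i + ρ * ϱ k i| ≤ |lamk k i| + ρ * |ϱ k i| := by
              calc |lamk k i + ρ * ϱ k i| ≤ |lamk k i| + |ρ * ϱ k i| := abs_add_le _ _
                _ = |lamk k i| + ρ * |ϱ k i| := by rw [abs_mul, abs_of_pos hρ]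
            nlinarith [hρ.le]
        _ = m * ((‖lamstar‖ + R + ρ * (s * (1 + Fmax))) * M) := by
            rw [Finset.sum_const, Finset.card_univ, Fintype.card_fin, nsmul_eq_mul]
    have b3 : ‖mulVecE Aᵀ (nuk k + ρ • ς k)‖
        ≤ CT * (‖nustar‖ + R + ρ * (s * (1 + hmax))) := by
      calc ‖mulVecE Aᵀ (nuk k + ρ • ς k)‖ ≤ CT * ‖nuk k + ρ • ς k‖ := hCT _
        _ ≤ CT * (‖nustar‖ + R + ρ * (s * (1 + hmax))) := by
            apply mul_le_mul_of_nonneg_left ?_ hCT0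
            calc ‖nuk k + ρ • ς k‖ ≤ ‖nuk k‖ + ‖ρ • ς k‖ := norm_add_le _ _
              _ = ‖nuk k‖ + ρ * ‖ς k‖ := by rw [norm_smul, Real.norm_eq_abs, abs_of_pos hρ]
              _ ≤ ‖nustar‖ + R + ρ * (s * (1 + hmax)) := by
                  nlinarith [hnuN k, hςb k, hρ.le]
    have n1 := norm_add_le (g0 (xk k) + ∑ i, (lamk k i + ρ * ϱ k i) • g i (xk k))
      (mulVecE Aᵀ (nuk k + ρ • ς k))
    have n2 := norm_add_le (g0 (xk k)) (∑ i, (lamk k i + ρ * ϱ k i) • g i (xk k))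
    rw [hTbd]
    linarith
  set Tmax : ℝ := Tb + Fmax + hmax + 1 with hTm
  have hTbnn : 0 ≤ Tb := le_trans (norm_nonneg _) (hTxb 0)
  have hTmaxpos : 0 < Tmax := by rw [hTm]; linarith
  have hnTb : ∀ k, nT k ≤ Tmax := by
    intro k
    rw [hnT k, hTm]
    calc Real.sqrt (‖Tx k‖ ^ 2 + ‖Fplus f (xk k)‖ ^ 2 + ‖mulVecE A (xk k) - b‖ ^ 2)
        ≤ ‖Tx k‖ + ‖Fplus f (xk k)‖ + ‖mulVecE A (xk k) - b‖ :=
          esqrt3_le _ _ _ (norm_nonneg _) (norm_nonneg _) (norm_nonneg _)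
      _ ≤ Tb + Fmax + hmax + 1 := by linarith [hTxb k, hFb k, hhb k]
  have hαlb : ∀ k, γ k ≤ α k * Tmax := by
    intro k
    have h1 := hαnT k
    nlinarith [(hαpos k).le, hnTb k]
  have hsumγ : ∀ k : ℕ, 1 ≤ k →
      (1/2 : ℝ) * ((k:ℝ)+1) ^ (δ/2) ≤ ∑ j ∈ Finset.Icc 1 k, γ j := by
    intro k hk
    have hterm : ∀ j ∈ Finset.Icc 1 k, ((k:ℝ)+1) ^ (-1 + δ/2) ≤ γ j := by
      intro j hj
      rw [hγ j]
      have hj' := Finset.mem_Icc.mp hj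
      have hjk : (j:ℝ) ≤ (k:ℝ) := Nat.cast_le.mpr hj'.2
      exact Real.rpow_le_rpow_of_nonpos (by positivity) (by linarith) (by linarith)
    have hcard : (Finset.Icc 1 k).card = k := by rw [Nat.card_Icc]; omega
    have hsum1 : (k:ℝ) * ((k:ℝ)+1) ^ (-1 + δ/2) ≤ ∑ j ∈ Finset.Icc 1 k, γ j := by
      have h := Finset.card_nsmul_le_sum (Finset.Icc 1 k) γ _ hterm
      rwa [hcard, nsmul_eq_mul] at h
    have hsplit : ((k:ℝ)+1) * ((k:ℝ)+1) ^ (-1 + δ/2) = ((k:ℝ)+1) ^ (δ/2) := by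
      nth_rewrite 1 [← Real.rpow_one ((k:ℝ)+1)]
      rw [← Real.rpow_add (by positivity)]
      congr 1
      ring
    have hk1 : (1:ℝ) ≤ (k:ℝ) := Nat.one_le_cast.mpr hk
    have hrp : 0 ≤ ((k:ℝ)+1) ^ (-1 + δ/2) := Real.rpow_nonneg (by positivity) _
    calc (1/2:ℝ) * ((k:ℝ)+1) ^ (δ/2) = (((k:ℝ)+1)/2) * ((k:ℝ)+1) ^ (-1+δ/2) := by
          rw [← hsplit]; ring
      _ ≤ (k:ℝ) * ((k:ℝ)+1) ^ (-1+δ/2) := mul_le_mul_of_nonneg_right (by linarith) hrp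
      _ ≤ _ := hsum1
  have hC1 : ∀ k : ℕ, 1 ≤ k → iT (ik k) * ∑ j ∈ Finset.Icc 1 k, α j ≤ (D 0 + Sγ) / 2 := by
    intro k hk
    have h1 : ∑ j ∈ Finset.range (k+1), 2 * α j * iT j ≤ D 0 + Sγ := by
      have h := htel (k+1)
      have h2 := hpartial (k+1)
      have h3 := hDnn (k+1)
      linarith
    have hsub : Finset.Icc 1 k ⊆ Finset.range (k+1) := by
      intro j hj
      rw [Finset.mem_range]
      have := (Finset.mem_Icc.mp hj).2
      omega
    have h4 : ∑ j ∈ Finset.Icc 1 k, 2 * α j * iT j ≤ ∑ j ∈ Finset.range (k+1), 2 * α j * iT j :=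
      Finset.sum_le_sum_of_subset_of_nonneg hsub fun j _ _ =>
        mul_nonneg (mul_nonneg (by norm_num) (hαpos j).le) (hiTnn j)
    have h5 : iT (ik k) * ∑ j ∈ Finset.Icc 1 k, α j ≤ ∑ j ∈ Finset.Icc 1 k, α j * iT j := by
      rw [Finset.mul_sum]
      apply Finset.sum_le_sum
      intro j hj
      have hj' := Finset.mem_Icc.mp hj
      have h6 := (hik k hk).2.2 j hj'.1 hj'.2
      nlinarith [(hαpos j).le]
    have h7 : ∑ j ∈ Finset.Icc 1 k, 2 * α j * iT j = 2 * ∑ j ∈ Finset.Icc 1 k, α j * iT j := by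
      rw [Finset.mul_sum]
      exact Finset.sum_congr rfl fun j _ => by ring
    linarith
  set C2 : ℝ := Tmax * (D 0 + Sγ) with hC2def
  have hC2nn : 0 ≤ C2 := mul_nonneg hTmaxpos.le (by linarith [hDnn 0])
  have hiTub : ∀ k : ℕ, 1 ≤ k → iT (ik k) ≤ C2 * ((k:ℝ)+1) ^ (-(δ/2)) := by
    intro k hk
    have hupos : (0:ℝ) < ((k:ℝ)+1) ^ (δ/2) := Real.rpow_pos_of_pos (by positivity) _
    have hαsum : (1/2:ℝ) * ((k:ℝ)+1) ^ (δ/2) ≤ Tmax * ∑ j ∈ Finset.Icc 1 k, α j := by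
      have h1 : ∑ j ∈ Finset.Icc 1 k, γ j ≤ ∑ j ∈ Finset.Icc 1 k, α j * Tmax :=
        Finset.sum_le_sum fun j _ => hαlb j
      have h2 : ∑ j ∈ Finset.Icc 1 k, α j * Tmax = Tmax * ∑ j ∈ Finset.Icc 1 k, α j := by
        rw [Finset.mul_sum]
        exact Finset.sum_congr rfl fun j _ => by ring
      calc (1/2:ℝ) * ((k:ℝ)+1) ^ (δ/2) ≤ ∑ j ∈ Finset.Icc 1 k, γ j := hsumγ k hk
        _ ≤ ∑ j ∈ Finset.Icc 1 k, α j * Tmax := h1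
        _ = Tmax * ∑ j ∈ Finset.Icc 1 k, α j := h2
    have p1 : iT (ik k) * (((k:ℝ)+1) ^ (δ/2))
        ≤ iT (ik k) * (2 * (Tmax * ∑ j ∈ Finset.Icc 1 k, α j)) :=
      mul_le_mul_of_nonneg_left (by linarith) (hiTnn _)
    have p2 : Tmax * (iT (ik k) * ∑ j ∈ Finset.Icc 1 k, α j) ≤ Tmax * ((D 0 + Sγ)/2) :=
      mul_le_mul_of_nonneg_left (hC1 k hk) hTmaxpos.le
    rw [Real.rpow_neg (by positivity : (0:ℝ) ≤ (k:ℝ)+1), ← div_eq_mul_inv, le_div_iff₀ hupos,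
      hC2def]
    linarith
  have hbase : ∀ k : ℕ, (1:ℝ) ≤ (k:ℝ) + 1 := fun k => by
    have := Nat.cast_nonneg (α := ℝ) k
    linarith
  have hexp : ∀ k : ℕ, ((k:ℝ)+1) ^ (-(δ/2)) ≤ ((k:ℝ)+1) ^ (-(δ/(2*s))) := by
    intro k
    apply Real.rpow_le_rpow_of_exponent_le (hbase k)
    have h1 : δ/(2*s) ≤ δ/2 := by
      rw [div_le_div_iff₀ (by positivity) (by norm_num)]
      nlinarith [hδ0.le, hs1]
    linarith
  have hvpos : ∀ k : ℕ, (0:ℝ) < ((k:ℝ)+1) ^ (-(δ/(2*s))) := fun k =>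
    Real.rpow_pos_of_pos (by positivity) _
  set cF : ℝ := (C2 / (ρ * s)) ^ s⁻¹ with hcF
  have hcFnn : 0 ≤ cF := Real.rpow_nonneg (div_nonneg hC2nn (by positivity)) _
  have hFh : ∀ k : ℕ, 1 ≤ k → ‖Fplus f (xk (ik k))‖ ≤ cF * ((k:ℝ)+1) ^ (-(δ/(2*s)))
      ∧ ‖mulVecE A (xk (ik k)) - b‖ ≤ cF * ((k:ℝ)+1) ^ (-(δ/(2*s))) := by
    intro k hk
    have h1 := hiTF (ik k)
    have h2 := hiTub k hk
    have h3 : ‖Fplus f (xk (ik k))‖ ^ s + ‖mulVecE A (xk (ik k)) - b‖ ^ s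
        ≤ C2 / (ρ * s) * ((k:ℝ)+1) ^ (-(δ/2)) := by
      rw [div_mul_eq_mul_div, le_div_iff₀ (by positivity)]
      nlinarith
    have key : ∀ t : ℝ, 0 ≤ t → t ^ s ≤ C2 / (ρ*s) * ((k:ℝ)+1) ^ (-(δ/2))
        → t ≤ cF * ((k:ℝ)+1) ^ (-(δ/(2*s))) := by
      intro t ht hts
      have e1 : t = (t ^ s) ^ s⁻¹ := by
        calc t = t ^ (1:ℝ) := (Real.rpow_one t).symm
          _ = t ^ (s * s⁻¹) := by rw [mul_inv_cancel₀ hs0.ne']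
          _ = (t ^ s) ^ s⁻¹ := Real.rpow_mul ht s s⁻¹
      rw [e1]
      calc (t ^ s) ^ s⁻¹ ≤ (C2/(ρ*s) * ((k:ℝ)+1) ^ (-(δ/2))) ^ s⁻¹ :=
            Real.rpow_le_rpow (Real.rpow_nonneg ht s) hts (by positivity)
        _ = cF * (((k:ℝ)+1) ^ (-(δ/2))) ^ s⁻¹ := by
            rw [Real.mul_rpow (div_nonneg hC2nn (by positivity))
              (Real.rpow_nonneg (by positivity) _), hcF]
        _ = cF * ((k:ℝ)+1) ^ (-(δ/(2*s))) := by
            congr 1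
            rw [← Real.rpow_mul (by positivity)]
            congr 1
            field_simp
    have hrF := Real.rpow_nonneg (norm_nonneg (Fplus f (xk (ik k)))) s
    have hrh := Real.rpow_nonneg (norm_nonneg (mulVecE A (xk (ik k)) - b)) s
    exact ⟨key _ (norm_nonneg _) (by linarith), key _ (norm_nonneg _) (by linarith)⟩
  have hf0b : ∀ k : ℕ, 1 ≤ k → |f0 (xk (ik k)) - pstar|
      ≤ C2 * ((k:ℝ)+1) ^ (-(δ/(2*s)))
        + (‖lamstar‖ + ‖nustar‖) * (2 * cF * ((k:ℝ)+1) ^ (-(δ/(2*s)))) := by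
    intro k hk
    obtain ⟨hF1, hh1⟩ := hFh k hk
    have hLag : Lag f0 f A b (xk (ik k)) lamstar nustar
        = f0 (xk (ik k)) + ⟪lamstar, Fplus f (xk (ik k))⟫
          + ⟪nustar, mulVecE A (xk (ik k)) - b⟫ := rfl
    have hin1 : |⟪lamstar, Fplus f (xk (ik k))⟫| ≤ ‖lamstar‖ * ‖Fplus f (xk (ik k))‖ :=
      abs_real_inner_le_norm _ _
    have hin2 : |⟪nustar, mulVecE A (xk (ik k)) - b⟫|
        ≤ ‖nustar‖ * ‖mulVecE A (xk (ik k)) - b‖ := abs_real_inner_le_norm _ _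
    have hrF := Real.rpow_nonneg (norm_nonneg (Fplus f (xk (ik k)))) s
    have hrh := Real.rpow_nonneg (norm_nonneg (mulVecE A (xk (ik k)) - b)) s
    have hnonneg : 0 ≤ ρ * (s * (‖Fplus f (xk (ik k))‖ ^ s
        + ‖mulVecE A (xk (ik k)) - b‖ ^ s)) :=
      mul_nonneg hρ.le (mul_nonneg hs0.le (add_nonneg hrF hrh))
    have hup : f0 (xk (ik k)) - pstar ≤ iT (ik k)
        + ‖lamstar‖ * ‖Fplus f (xk (ik k))‖ + ‖nustar‖ * ‖mulVecE A (xk (ik k)) - b‖ := by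
      have h1 := hkey (ik k)
      rw [hLag] at h1
      have a1 := neg_abs_le ⟪lamstar, Fplus f (xk (ik k))⟫
      have a2 := neg_abs_le ⟪nustar, mulVecE A (xk (ik k)) - b⟫
      linarith
    have hlow : pstar - f0 (xk (ik k)) ≤ ‖lamstar‖ * ‖Fplus f (xk (ik k))‖
        + ‖nustar‖ * ‖mulVecE A (xk (ik k)) - b‖ := by
      have h1 := hsaddle2 (xk (ik k))
      rw [hLag] at h1
      have a1 := le_abs_self ⟪lamstar, Fplus f (xk (ik k))⟫
      have a2 := le_abs_self ⟪nustar, mulVecE A (xk (ik k)) - b⟫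
      linarith
    have hiT2 : iT (ik k) ≤ C2 * ((k:ℝ)+1) ^ (-(δ/(2*s))) :=
      le_trans (hiTub k hk) (mul_le_mul_of_nonneg_left (hexp k) hC2nn)
    have q1 : ‖lamstar‖ * ‖Fplus f (xk (ik k))‖
        ≤ ‖lamstar‖ * (cF * ((k:ℝ)+1) ^ (-(δ/(2*s)))) :=
      mul_le_mul_of_nonneg_left hF1 (norm_nonneg _)
    have q2 : ‖nustar‖ * ‖mulVecE A (xk (ik k)) - b‖
        ≤ ‖nustar‖ * (cF * ((k:ℝ)+1) ^ (-(δ/(2*s)))) :=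
      mul_le_mul_of_nonneg_left hh1 (norm_nonneg _)
    have hC2v : 0 ≤ C2 * ((k:ℝ)+1) ^ (-(δ/(2*s))) := mul_nonneg hC2nn (hvpos k).le
    rw [abs_le]
    constructor
    · nlinarith [hlow, q1, q2, hC2v, mul_nonneg (norm_nonneg lamstar)
        (mul_nonneg hcFnn (hvpos k).le), mul_nonneg (norm_nonneg nustar)
        (mul_nonneg hcFnn (hvpos k).le)]
    · nlinarith [hup, q1, q2, hiT2, mul_nonneg (norm_nonneg lamstar)
        (mul_nonneg hcFnn (hvpos k).le), mul_nonneg (norm_nonneg nustar)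
        (mul_nonneg hcFnn (hvpos k).le)]
  set W : ℝ := C2 + (‖lamstar‖ + ‖nustar‖) * (2 * cF) + 2 * cF + 1 with hW
  have hWpos : 0 < W := by
    rw [hW]
    have h1 : 0 ≤ (‖lamstar‖ + ‖nustar‖) * (2 * cF) :=
      mul_nonneg (by positivity) (by linarith)
    linarith
  have hmain : ∀ k : ℕ, 1 ≤ k →
      |f0 (xk (ik k)) - pstar| ≤ W * ((k : ℝ) + 1) ^ (-(δ / (2 * s))) ∧
      ‖Fplus f (xk (ik k))‖ + ‖mulVecE A (xk (ik k)) - b‖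
        ≤ W * ((k : ℝ) + 1) ^ (-(δ / (2 * s))) := by
    intro k hk
    have hv := (hvpos k).le
    obtain ⟨hF1, hh1⟩ := hFh k hk
    have h1 := hf0b k hk
    have hcv : 0 ≤ cF * ((k:ℝ)+1) ^ (-(δ/(2*s))) := mul_nonneg hcFnn hv
    constructor
    · rw [hW]
      nlinarith [mul_nonneg hcFnn hv, hv]
    · rw [hW]
      nlinarith [mul_nonneg hC2nn hv, mul_nonneg (mul_nonneg
        (add_nonneg (norm_nonneg lamstar) (norm_nonneg nustar))
        (by linarith : (0:ℝ) ≤ 2 * cF)) hv, hv]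
  have hδs : 0 < δ/(2*s) := by positivity
  have ht0 : Filter.Tendsto (fun k : ℕ => ((k:ℝ)+1) ^ (-(δ/(2*s)))) Filter.atTop (nhds 0) := by
    have h1 := tendsto_rpow_neg_atTop hδs
    have h2 : Filter.Tendsto (fun k : ℕ => (k:ℝ)+1) Filter.atTop Filter.atTop :=
      Filter.tendsto_atTop_add_const_right _ 1 tendsto_natCast_atTop_atTop
    exact h1.comp h2
  have hWt : Filter.Tendsto (fun k : ℕ => W * ((k:ℝ)+1) ^ (-(δ/(2*s)))) Filter.atTop (nhds 0) := by
    have h := ht0.const_mul W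
    simpa using h
  refine ⟨W, hWpos, hmain, ?_, ?_⟩
  · exact squeeze_zero' (Filter.eventually_atTop.mpr ⟨1, fun k _ => abs_nonneg _⟩)
      (Filter.eventually_atTop.mpr ⟨1, fun k hk => (hmain k hk).1⟩) hWt
  · exact squeeze_zero' (Filter.eventually_atTop.mpr ⟨1, fun k _ =>
        add_nonneg (norm_nonneg _) (norm_nonneg _)⟩)
      (Filter.eventually_atTop.mpr ⟨1, fun k hk => (hmain k hk).2⟩) hWt
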